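/- Let C be an additive category and X a subcategory. If f_0 : A_0 → A_1 and φ_1 : A_1 → B_1 are both X-monic, and A_0 →^{φ_1 f_0} B_1 →^{g_1} B_2 → ⋯ and A_0 →^{f_0} A_1 →^{f_1} A_2 → ⋯ are right n-exact sequences connected by a morphism of complexes (1, φ_1, φ_2, …), then the morphism (f_2, φ_2)^T : A_2 → A_3 ⊕ B_2 is X-monic. -/

import Mathlib

open CategoryTheory Limits

universe v u

variable {C : Type u} [Category.{v} C]

section Defs
variable [Preadditive C]

/-- `g` is a weak cokernel of `f`: `g ∘ f = 0` and every morphism killing `f`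
factors (not necessarily uniquely) through `g`. -/
def IsWeakCokernel {A B X : C} (f : A ⟶ B) (g : B ⟶ X) : Prop :=
  f ≫ g = 0 ∧ ∀ ⦃D : C⦄ (h : B ⟶ D), f ≫ h = 0 → ∃ k : X ⟶ D, h = g ≫ k

/-- `g` is a cokernel of `f`. -/
def IsCokernelOf {A B X : C} (f : A ⟶ B) (g : B ⟶ X) : Prop :=
  f ≫ g = 0 ∧ ∀ ⦃D : C⦄ (h : B ⟶ D), f ≫ h = 0 → ∃! k : X ⟶ D, h = g ≫ k

/-- `f` is a weak kernel of `g`. -/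
def IsWeakKernel {A B X : C} (g : B ⟶ X) (f : A ⟶ B) : Prop :=
  f ≫ g = 0 ∧ ∀ ⦃D : C⦄ (h : D ⟶ B), h ≫ g = 0 → ∃ k : D ⟶ A, h = k ≫ f

/-- `f` is a kernel of `g`. -/
def IsKernelOf {A B X : C} (g : B ⟶ X) (f : A ⟶ B) : Prop :=
  f ≫ g = 0 ∧ ∀ ⦃D : C⦄ (h : D ⟶ B), h ≫ g = 0 → ∃! k : D ⟶ A, h = k ≫ f

/-- The sequence `X 0 → X 1 → ⋯ → X (n+1)` is right `n`-exact, i.e.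
`(d 1, …, d n)` is an `n`-cokernel of `d 0`: each `d (k+1)` with `k + 2 ≤ n` is a
weak cokernel of `d k`, and `d n` is a cokernel of `d (n-1)`. -/
def IsRightNExactSeq (n : ℕ) (X : ℕ → C) (d : ∀ i, X i ⟶ X (i + 1)) : Prop :=
  (∀ k, k + 2 ≤ n → IsWeakCokernel (d k) (d (k + 1))) ∧ IsCokernelOf (d (n - 1)) (d (n - 1 + 1))

/-- The sequence `X 0 → X 1 → ⋯ → X (n+1)` is left `n`-exact. -/
def IsLeftNExactSeq (n : ℕ) (X : ℕ → C) (d : ∀ i, X i ⟶ X (i + 1)) : Prop :=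
  (∀ k, k + 2 ≤ n → IsWeakKernel (d (k + 1)) (d k)) ∧ IsKernelOf (d 1) (d 0)

/-- `f : A ⟶ B` is `X`-monic with respect to the subcategory given by the predicate `P`:
every morphism from `A` to an object of `P` factors through `f`. -/
def XMonic (P : C → Prop) {A B : C} (f : A ⟶ B) : Prop :=
  ∀ ⦃M : C⦄, P M → ∀ g : A ⟶ M, ∃ h : B ⟶ M, g = f ≫ h

/-- `f` is `X`-epic. -/
def XEpic (P : C → Prop) {A B : C} (f : A ⟶ B) : Prop :=
  ∀ ⦃M : C⦄, P M → ∀ g : M ⟶ B, ∃ h : M ⟶ A, g = h ≫ f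

/-- `(-1)^k • f`. -/
def psign (k : ℕ) {A B : C} (f : A ⟶ B) : A ⟶ B := if Even k then f else -f

/-- `f : A ⟶ B` has an `n`-cokernel. -/
def HasNCokernel (n : ℕ) {A B : C} (f : A ⟶ B) : Prop :=
  ∃ (X : ℕ → C) (d : ∀ i, X i ⟶ X (i + 1)) (e0 : X 0 = A) (e1 : X 1 = B),
    d 0 = eqToHom e0 ≫ f ≫ eqToHom e1.symm ∧ IsRightNExactSeq n X d

/-- `f : A ⟶ B` has a special `n`-cokernel with respect to `P`: an `n`-cokernel all of whose
intermediate objects lie in `P`. -/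
def HasSpecialNCokernel (P : C → Prop) (n : ℕ) {A B : C} (f : A ⟶ B) : Prop :=
  ∃ (X : ℕ → C) (d : ∀ i, X i ⟶ X (i + 1)) (e0 : X 0 = A) (e1 : X 1 = B),
    d 0 = eqToHom e0 ≫ f ≫ eqToHom e1.symm ∧ IsRightNExactSeq n X d ∧
    ∀ i, 2 ≤ i → i ≤ n → P (X i)

end Defs

/-- Let `X` be a subcategory (predicate `P`).  If `f 0 : A 0 ⟶ A 1` and
`φ 1 : A 1 ⟶ B 1` are both `X`-monic, and `A 0 → A 1 → A 2 → ⋯` and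
`A 0 → B 1 → B 2 → ⋯` (with first morphism `φ 1 ∘ f 0`) are right `n`-exact sequences
connected by a morphism of complexes `(1, φ 1, φ 2, …)`, then
`(f 2, φ 2)ᵀ : A 2 ⟶ A 3 ⊞ B 2` is `X`-monic. -/
theorem f2_phi2_XMonic
    [Preadditive C] [HasZeroObject C] [HasFiniteBiproducts C] [HasBinaryBiproducts C]
    (P : C → Prop) (n : ℕ) (hn : 1 ≤ n)
    (A B : ℕ → C) (f : ∀ i, A i ⟶ A (i + 1)) (g : ∀ i, B i ⟶ B (i + 1))
    (e : B 0 = A 0)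
    (φ : ∀ i, A i ⟶ B i) (hφ0 : φ 0 = eqToHom e.symm)
    (hA : IsRightNExactSeq n A f) (hB : IsRightNExactSeq n B g)
    (hf0 : XMonic P (f 0)) (hφ1 : XMonic P (φ 1))
    (hg0 : g 0 = eqToHom e ≫ f 0 ≫ φ 1)
    (hcomm : ∀ i, f i ≫ φ (i + 1) = φ i ≫ g i) :
    XMonic P (biprod.lift (f 2) (φ 2)) := by
  intro M hM h
  obtain ⟨u, hu⟩ := hφ1 hM (f 1 ≫ h)
  -- f 0 ≫ f 1 = 0
  have hf01 : f 0 ≫ f 1 = 0 := by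
    rcases eq_or_lt_of_le hn with h1 | h2
    · have := hA.2.1
      rw [← h1] at this
      simpa using this
    · exact (hA.1 0 h2).1
  -- g 1 is a weak cokernel of g 0
  have hg1wc : IsWeakCokernel (g 0) (g 1) := by
    rcases eq_or_lt_of_le hn with h1 | h2
    · have := hB.2
      rw [← h1] at this
      exact ⟨this.1, fun D x hx => (this.2 x hx).exists⟩
    · exact hB.1 0 h2
  have hgu : g 0 ≫ u = 0 := by
    rw [hg0]
    simp only [Category.assoc]
    rw [← hu, ← Category.assoc (f 0), hf01, zero_comp, comp_zero]
  obtain ⟨v, hv⟩ := hg1wc.2 u hgu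
  have key : f 1 ≫ (h - φ 2 ≫ v) = 0 := by
    rw [Preadditive.comp_sub, ← Category.assoc, hcomm 1, Category.assoc, ← hv, ← hu, sub_self]
  rcases eq_or_lt_of_le hn with h1 | h2
  · -- n = 1 : f 1 is a cokernel of f 0, hence epi
    have hc := hA.2
    rw [← h1] at hc
    have hz : h - φ 2 ≫ v = 0 := by
      have e1 := (hc.2 (0 : A 1 ⟶ M) (by simp)).unique
        (y₁ := h - φ 2 ≫ v) (y₂ := 0) (by rw [key]) (by simp)
      exact e1
    refine ⟨biprod.desc 0 v, ?_⟩
    rw [biprod.lift_desc, comp_zero, zero_add]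
    rw [← sub_eq_zero]
    exact hz
  · -- n ≥ 2 : f 2 is a weak cokernel of f 1
    have hf2wc : IsWeakCokernel (f 1) (f 2) := by
      rcases eq_or_lt_of_le (show 2 ≤ n from h2) with h3 | h4
      · have := hA.2
        rw [← h3] at this
        exact ⟨this.1, fun D x hx => (this.2 x hx).exists⟩
      · exact hA.1 1 h4
    obtain ⟨w, hw⟩ := hf2wc.2 (h - φ 2 ≫ v) key
    refine ⟨biprod.desc w v, ?_⟩
    rw [biprod.lift_desc, ← hw]
    abel
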